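/- arXiv:2604.27485 — 2 statements merged into one kernel-verified Lean document; each statement's English description precedes it below -/
import Mathlib

section
/- If a family of real-valued random variables {z(T) : T > 0} satisfies the local large deviation principle with a function D, then for every α ∈ ℝ there exists a positive function ε̃_T → 0 (as T → ∞) such that for every positive function ε_T → 0 satisfying ε_T ≥ c·ε̃_T for all T for some constant c > 0, one has lim_{T→∞} (1/T) ln P(|z(T) − α| < ε_T) = −D(α) (meaning the left-hand side tends to −∞ when D(α) = +∞). -/
open MeasureTheory Filter Set
open scoped ENNReal Topology

/-- The (1/T) ln P(z(T) ∈ B) expression, valued in the extended reals so that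
`ln 0 = -∞` is handled correctly. -/
noncomputable def logProbRate {Ω : Type*} [MeasurableSpace Ω] (P : Measure Ω)
    (z : ℝ → Ω → ℝ) (B : Set ℝ) (T : ℝ) : EReal :=
  (((1 : ℝ) / T : ℝ) : EReal) * ENNReal.log (P {ω | z T ω ∈ B})

/-- Monotonicity of `logProbRate` in the ball radius, for nonnegative `T`. -/
lemma logProbRate_mono {Ω : Type*} [MeasurableSpace Ω] (P : Measure Ω)
    (z : ℝ → Ω → ℝ) (α : ℝ) {T : ℝ} (hT : 0 ≤ T) {e1 e2 : ℝ} (h : e1 ≤ e2) :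
    logProbRate P z {x | |x - α| < e1} T ≤ logProbRate P z {x | |x - α| < e2} T := by
  unfold logProbRate
  apply mul_le_mul_of_nonneg_left
  · apply ENNReal.log_monotone
    apply measure_mono
    intro ω hω
    exact lt_of_lt_of_le hω h
  · have : (0:ℝ) ≤ 1 / T := by positivity
    exact_mod_cast EReal.coe_le_coe_iff.2 this

/-- If a family of real-valued random variables `{z(T) : T > 0}` satisfies the
local large deviation principle with a function `D`, then for every `α ∈ ℝ` there is a positive
function `ε̃_T → 0` such that for every positive function `ε_T → 0` with `ε_T ≥ c·ε̃_T` for all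
`T` for some constant `c > 0`, one has `lim_{T→∞} (1/T) ln P(|z(T) − α| < ε_T) = −D(α)`
(in the extended reals, so the left-hand side tends to `−∞` when `D(α) = ∞`). -/
theorem stmt3 {Ω : Type*} [MeasurableSpace Ω] (P : Measure Ω) [IsProbabilityMeasure P]
    (z : ℝ → Ω → ℝ) (hz : ∀ T, Measurable (z T))
    (D : ℝ → ℝ≥0∞)
    (hDne : ∃ α, D α ≠ ⊤)
    (hlldp : ∀ α : ℝ,
      Tendsto (fun ε : ℝ =>
          Filter.liminf (logProbRate P z {x | |x - α| < ε}) Filter.atTop)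
        (𝓝[>] 0) (𝓝 (-(D α : EReal))) ∧
      Tendsto (fun ε : ℝ =>
          Filter.limsup (logProbRate P z {x | |x - α| < ε}) Filter.atTop)
        (𝓝[>] 0) (𝓝 (-(D α : EReal)))) :
    ∀ α : ℝ, ∃ εtilde : ℝ → ℝ,
      (∀ T, 0 < εtilde T) ∧ Tendsto εtilde atTop (𝓝 0) ∧
      ∀ ε : ℝ → ℝ, (∀ T, 0 < ε T) → Tendsto ε atTop (𝓝 0) →
        (∃ c > (0:ℝ), ∀ T, c * εtilde T ≤ ε T) →
        Tendsto (fun T : ℝ =>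
            (((1 : ℝ) / T : ℝ) : EReal) * ENNReal.log (P {ω | |z T ω - α| < ε T}))
          atTop (𝓝 (-(D α : EReal))) := by
  intro α
  set f : ℝ → ℝ → EReal := fun e T => logProbRate P z {x | |x - α| < e} T with hf
  have hfeq : ∀ ε : ℝ → ℝ,
      (fun T : ℝ => (((1 : ℝ) / T : ℝ) : EReal) * ENNReal.log (P {ω | |z T ω - α| < ε T}))
        = fun T => f (ε T) T := fun ε => rfl
  -- Upper bound: for any ε → 0, limsup f(ε T) T ≤ -D α.
  have upper : ∀ ε : ℝ → ℝ, Tendsto ε atTop (𝓝 0) →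
      limsup (fun T => f (ε T) T) atTop ≤ -(D α : EReal) := by
    intro ε hε
    apply ge_of_tendsto (hlldp α).2
    filter_upwards [self_mem_nhdsWithin] with δ (hδ : (0:ℝ) < δ)
    have h1 : ∀ᶠ T : ℝ in atTop, ε T < δ :=
      hε.eventually (Filter.Tendsto.eventually_lt_const (by simpa using hδ) tendsto_id)
    have h2 : ∀ᶠ T : ℝ in atTop, f (ε T) T ≤ f δ T := by
      filter_upwards [eventually_ge_atTop (0:ℝ), h1] with T hT hTδ
      exact logProbRate_mono P z α hT hTδ.le
    exact limsup_le_limsup h2 (by isBoundedDefault) (by isBoundedDefault)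
  -- liminf lower bound for each fixed δ > 0.
  have Llow : ∀ δ : ℝ, 0 < δ →
      -(D α : EReal) ≤ liminf (f δ) atTop := by
    intro δ hδ
    apply le_of_tendsto (hlldp α).1
    filter_upwards [Ioo_mem_nhdsGT_of_mem ⟨le_refl 0, hδ⟩] with δ' hδ'
    have h2 : ∀ᶠ T : ℝ in atTop, f δ' T ≤ f δ T := by
      filter_upwards [eventually_ge_atTop (0:ℝ)] with T hT
      exact logProbRate_mono P z α hT hδ'.2.le
    exact liminf_le_liminf h2 (by isBoundedDefault) (by isBoundedDefault)
  by_cases hfin : D α = ⊤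
  · -- D α = ⊤ : the limit is ⊥, upper bound alone suffices.
    refine ⟨fun T => Real.exp (-T), fun T => Real.exp_pos _,
      Real.tendsto_exp_neg_atTop_nhds_zero, ?_⟩
    intro ε hεpos hε0 _
    rw [hfeq ε]
    have hbot : -(D α : EReal) = ⊥ := by rw [hfin]; rfl
    rw [hbot]
    refine tendsto_of_le_liminf_of_limsup_le bot_le ?_ (by isBoundedDefault) (by isBoundedDefault)
    rw [← hbot]; exact upper ε hε0
  · -- D α finite case.
    set d : ℝ := -(D α).toReal with hd
    have hcoe : -(D α : EReal) = ((d : ℝ) : EReal) := by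
      rw [hd]
      rw [← EReal.coe_toReal (x := ((D α : EReal))) (by simpa using hfin) (by simp)]
      rw [EReal.toReal_coe_ennreal]
      exact_mod_cast (EReal.coe_neg (D α).toReal).symm
    -- For each n, eventually f (1/(n+1)^2) T > d - 1/(n+1).
    have key : ∀ n : ℕ, ∃ Tn : ℝ, ∀ T ≥ Tn,
        ((d - 1/(n+1) : ℝ) : EReal) < f ((1/(n+1):ℝ)^2) T := by
      intro n
      have h1 : ((d - 1/(n+1) : ℝ) : EReal) < liminf (f ((1/(n+1):ℝ)^2)) atTop := by
        refine lt_of_lt_of_le ?_ (Llow _ (by positivity))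
        rw [hcoe]
        exact EReal.coe_lt_coe_iff.2 (by
          have : (0:ℝ) < 1/(n+1) := by positivity
          linarith)
      have := eventually_lt_of_lt_liminf h1
      rw [eventually_atTop] at this
      exact this
    choose h hh using key
    -- Recursive thresholds A n, strictly increasing to infinity, with A n ≥ h n.
    set A : ℕ → ℝ := fun n => Nat.rec (max (h 0) 0)
      (fun n ih => max (ih + 1) (h (n+1))) n with hA
    have hA0 : A 0 = max (h 0) 0 := rfl
    have hAsucc : ∀ n, A (n+1) = max (A n + 1) (h (n+1)) := fun n => rfl
    have hAh : ∀ n, h n ≤ A n := by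
      intro n; cases n with
      | zero => rw [hA0]; exact le_max_left _ _
      | succ n => rw [hAsucc]; exact le_max_right _ _
    have hAmono : Monotone A := by
      apply monotone_nat_of_le_succ
      intro n; rw [hAsucc]
      exact le_trans (by linarith) (le_max_left _ _)
    have hAge : ∀ n : ℕ, (n : ℝ) ≤ A n := by
      intro n; induction n with
      | zero => simp [hA0]
      | succ n ih =>
        rw [hAsucc]
        refine le_trans ?_ (le_max_left _ _)
        push_cast; linarith
    -- the index function
    set N : ℝ → ℕ := fun T => sSup {n : ℕ | A n ≤ T} with hN
    have hbdd : ∀ T : ℝ, BddAbove {n : ℕ | A n ≤ T} := by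
      intro T
      refine ⟨Nat.floor (max T 0), fun n hn => ?_⟩
      have : (n : ℝ) ≤ max T 0 := le_trans (hAge n) (le_trans hn (le_max_left _ _))
      exact Nat.le_floor this
    have hNge : ∀ (m : ℕ) (T : ℝ), A m ≤ T → m ≤ N T := by
      intro m T hm
      exact le_csSup (hbdd T) hm
    have hNmem : ∀ T : ℝ, A 0 ≤ T → A (N T) ≤ T := by
      intro T hT
      exact Nat.sSup_mem ⟨0, hT⟩ (hbdd T)
    -- epsilon tilde
    refine ⟨fun T => 1 / (N T + 1), fun T => by positivity, ?_, ?_⟩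
    · -- tendsto 0
      rw [Metric.tendsto_nhds]
      intro δ hδ
      obtain ⟨m, hm⟩ := exists_nat_gt (1/δ)
      filter_upwards [eventually_ge_atTop (A m)] with T hT
      have hNm : m ≤ N T := hNge m T hT
      have h1 : (0:ℝ) < (N T : ℝ) + 1 := by positivity
      have h2 : (1:ℝ) / (N T + 1) ≤ 1 / (m + 1) := by
        apply one_div_le_one_div_of_le (by positivity)
        have : (m:ℝ) ≤ N T := by exact_mod_cast hNm
        linarith
      have h3 : (1:ℝ) / (m + 1) < δ := by
        rw [div_lt_iff₀ (by positivity)]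
        rw [div_lt_iff₀ hδ] at hm
        nlinarith
      rw [Real.dist_eq]
      have : (0:ℝ) < 1 / (N T + 1) := by positivity
      rw [abs_of_pos (by simpa using this)]
      simpa using lt_of_le_of_lt h2 h3
    · -- main limit statement
      intro ε hεpos hε0 ⟨c, hc, hcε⟩
      rw [hfeq ε, hcoe]
      refine tendsto_of_le_liminf_of_limsup_le ?_ ?_ (by isBoundedDefault) (by isBoundedDefault)
      · -- lower bound via le_liminf_iff
        apply (le_liminf_iff (by isBoundedDefault) (by isBoundedDefault)).2
        intro b hb
        obtain ⟨r, hbr, hrd⟩ := EReal.exists_between_coe_real hb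
        have hrd' : r < d := EReal.coe_lt_coe_iff.1 hrd
        -- choose m large enough
        obtain ⟨m₁, hm₁⟩ := exists_nat_gt (1/(d - r))
        obtain ⟨m₂, hm₂⟩ := exists_nat_gt (1/c)
        set m := max m₁ m₂ with hmdef
        filter_upwards [eventually_ge_atTop (max (A m) 1)] with T hT
        have hT1 : (1:ℝ) ≤ T := le_trans (le_max_right _ _) hT
        have hTA : A m ≤ T := le_trans (le_max_left _ _) hT
        have hNm : m ≤ N T := hNge m T hTA
        have hNmem' : A (N T) ≤ T := hNmem T (le_trans (hAmono (Nat.zero_le m)) hTA)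
        have hhT : h (N T) ≤ T := le_trans (hAh _) hNmem'
        have step1 : ((d - 1/(N T+1) : ℝ) : EReal) < f ((1/(N T+1):ℝ)^2) T :=
          hh (N T) T hhT
        -- (1/(N T+1))^2 ≤ c * (1/(N T+1))
        have hNr : (0:ℝ) < (N T : ℝ) + 1 := by positivity
        have hm₂N : 1/c ≤ (N T : ℝ) + 1 := by
          have : (m₂ : ℝ) ≤ (N T : ℝ) := by
            exact_mod_cast le_trans (le_max_right m₁ m₂) hNm
          linarith [hm₂.le]
        have h1x : (1:ℝ)/(N T + 1) ≤ c := by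
          have h5 : (1:ℝ) ≤ ((N T:ℝ)+1) * c := (div_le_iff₀ hc).1 hm₂N
          rw [div_le_iff₀ hNr]; linarith [mul_comm ((N T:ℝ)+1) c]
        have hsq : ((1/(N T+1):ℝ))^2 ≤ c * (1/(N T+1)) := by
          rw [sq]
          exact mul_le_mul_of_nonneg_right h1x (by positivity)
        have step2 : f ((1/(N T+1):ℝ)^2) T ≤ f (c * (1/(N T+1))) T :=
          logProbRate_mono P z α (by linarith) hsq
        have step3 : f (c * (1/(N T+1))) T ≤ f (ε T) T :=
          logProbRate_mono P z α (by linarith) (hcε T)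
        -- b < r ≤ d - 1/(N T + 1) < f ...
        have hdr : (0:ℝ) < d - r := by linarith
        have hm₁N : 1/(d - r) < (N T : ℝ) + 1 := by
          have : (m₁ : ℝ) ≤ (N T : ℝ) := by
            exact_mod_cast le_trans (le_max_left m₁ m₂) hNm
          linarith
        have hrle : r ≤ d - 1/(N T + 1) := by
          have h6 : (1:ℝ) < ((N T:ℝ)+1) * (d - r) := (div_lt_iff₀ hdr).1 hm₁N
          have h7 : (1:ℝ)/((N T:ℝ)+1) < d - r := by
            rw [div_lt_iff₀ hNr]; nlinarith
          linarith
        calc b < (r : EReal) := hbr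
          _ ≤ ((d - 1/(N T+1) : ℝ) : EReal) := EReal.coe_le_coe_iff.2 hrle
          _ < f ((1/(N T+1):ℝ)^2) T := step1
          _ ≤ f (ε T) T := le_trans step2 step3
      · rw [← hcoe]; exact upper ε hε0
end

section
/- Let S ⊆ ℝ be a convex set with nonempty interior and A : ℝ → ℝ a function that is convex on S, differentiable on the interior of S, and steep: |A'(μ_k)| → ∞ for every sequence μ_k in the interior of S converging to a finite boundary point of S. Define D(β) := sup_{μ ∈ S} (β·μ − A(μ)) ∈ (−∞, +∞]. If β lies in the interior of the set {β ∈ ℝ : D(β) < ∞}, then there exists μ in the interior of S such that A'(μ) = β and D(β) = μ·β − A(μ). -/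
open Filter Set
open scoped Topology

noncomputable section

/-- The Legendre transform `D(β) = sup_{μ ∈ S} (β·μ − A(μ))` of `A` restricted to `S`,
valued in the extended reals. -/
def legendre (S : Set ℝ) (A : ℝ → ℝ) (β : ℝ) : EReal :=
  ⨆ μ ∈ S, ((β * μ - A μ : ℝ) : EReal)

/-- Each value is below the Legendre transform. -/
lemma le_legendre (S : Set ℝ) (A : ℝ → ℝ) (γ : ℝ) {ν : ℝ} (hν : ν ∈ S) :
    ((γ * ν - A ν : ℝ) : EReal) ≤ legendre S A γ := by
  rw [legendre]
  exact le_iSup₂ (f := fun μ (_ : μ ∈ S) => ((γ * μ - A μ : ℝ) : EReal)) ν hν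

/-- If the Legendre transform is finite at `γ`, the values are uniformly bounded. -/
lemma legendre_bound (S : Set ℝ) (A : ℝ → ℝ) (γ : ℝ) (hγ : legendre S A γ ≠ ⊤)
    {μ₀ : ℝ} (hμ₀ : μ₀ ∈ S) : ∃ C : ℝ, ∀ ν ∈ S, γ * ν - A ν ≤ C := by
  have hbot : legendre S A γ ≠ ⊥ := by
    intro h
    have := le_legendre S A γ hμ₀
    rw [h, le_bot_iff] at this
    exact (EReal.coe_ne_bot _) this
  refine ⟨(legendre S A γ).toReal, fun ν hν => ?_⟩
  have h := le_legendre S A γ hν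
  rw [← EReal.coe_toReal hγ hbot] at h
  exact_mod_cast h

/-- Let `S ⊆ ℝ` be convex with nonempty interior and `A : ℝ → ℝ` convex
on `S`, differentiable on the interior of `S` (with derivative `A'`) and steep. If `β` lies in
the interior of `{β : D(β) < ∞}` where `D(β) = sup_{μ ∈ S}(βμ − A(μ))`, then there exists `μ`
in the interior of `S` with `A'(μ) = β` and `D(β) = μβ − A(μ)`. -/
theorem stmt10 (S : Set ℝ) (A A' : ℝ → ℝ)
    (hSconv : Convex ℝ S) (hSint : (interior S).Nonempty)
    (hAconv : ConvexOn ℝ S A)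
    (hderiv : ∀ μ ∈ interior S, HasDerivAt A (A' μ) μ)
    (hsteep : ∀ μs : ℕ → ℝ, (∀ k, μs k ∈ interior S) → ∀ μ₀ ∈ frontier S,
      Tendsto μs atTop (𝓝 μ₀) → Tendsto (fun k => |A' (μs k)|) atTop atTop)
    (β : ℝ)
    (hβ : β ∈ interior {b : ℝ | legendre S A b ≠ ⊤}) :
    ∃ μ ∈ interior S, A' μ = β ∧ legendre S A β = ((μ * β - A μ : ℝ) : EReal) := by
  classical
  obtain ⟨μ₀, hμ₀⟩ := hSint
  have hμ₀S : μ₀ ∈ S := interior_subset hμ₀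
  have hOC : OrdConnected (interior S) := hSconv.interior.ordConnected
  -- monotonicity of the derivative on the interior
  have hmono : ∀ x ∈ interior S, ∀ y ∈ interior S, x < y → A' x ≤ A' y := by
    intro x hx y hy hxy
    have h1 := hAconv.le_slope_of_hasDerivAt (interior_subset hx) (interior_subset hy) hxy
      (hderiv x hx)
    have h2 := hAconv.slope_le_of_hasDerivAt (interior_subset hx) (interior_subset hy) hxy
      (hderiv y hy)
    linarith
  -- extract a radius of finiteness
  rw [mem_interior_iff_mem_nhds, Metric.mem_nhds_iff] at hβ
  obtain ⟨ε, hε, hball⟩ := hβ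
  have hε2 : 0 < ε / 2 := by linarith
  have hup : legendre S A (β + ε / 2) ≠ ⊤ := by
    have : β + ε / 2 ∈ Metric.ball β ε := by
      simp only [Metric.mem_ball, Real.dist_eq]
      rw [abs_of_pos (by linarith : (0:ℝ) < β + ε / 2 - β)]
      linarith
    exact hball this
  have hdown : legendre S A (β - ε / 2) ≠ ⊤ := by
    have : β - ε / 2 ∈ Metric.ball β ε := by
      simp only [Metric.mem_ball, Real.dist_eq]
      rw [abs_of_neg (by linarith : β - ε / 2 - β < 0)]
      linarith
    exact hball this
  -- Claim 2: there exists an interior point with derivative ≥ β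
  have claim2 : ∃ μ₂ ∈ interior S, β ≤ A' μ₂ := by
    by_contra hcon
    push_neg at hcon
    have hslope : ∀ μ ∈ interior S, μ₀ < μ → A μ - A μ₀ ≤ β * μ - β * μ₀ := by
      intro μ hμ hlt
      have h2 := hAconv.slope_le_of_hasDerivAt hμ₀S (interior_subset hμ) hlt (hderiv μ hμ)
      rw [slope_def_field] at h2
      have hb := (hcon μ hμ).le
      have hpos : 0 < μ - μ₀ := sub_pos.2 hlt
      have := (div_le_iff₀ hpos).1 (h2.trans hb)
      nlinarith
    by_cases hb : BddAbove (interior S)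
    · -- finite upper boundary: contradict steepness
      set b := sSup (interior S) with hbdef
      have hbni : b ∉ interior S := by
        intro hmem
        obtain ⟨r, hr, hball'⟩ := Metric.isOpen_iff.1 isOpen_interior b hmem
        have hmem2 : b + r / 2 ∈ interior S := by
          apply hball'
          simp only [Metric.mem_ball, Real.dist_eq]
          rw [abs_of_pos (by linarith : (0:ℝ) < b + r / 2 - b)]
          linarith
        have := le_csSup hb hmem2
        linarith
      have hμ₀b : μ₀ < b :=
        lt_of_le_of_ne (le_csSup hb hμ₀) (fun h => hbni (h ▸ hμ₀))
      have hbf : b ∈ frontier S := by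
        rw [frontier]
        exact ⟨closure_mono interior_subset (csSup_mem_closure ⟨μ₀, hμ₀⟩ hb), hbni⟩
      set μs : ℕ → ℝ := fun k => b - (b - μ₀) / (k + 2) with hμsdef
      have hbm : 0 < b - μ₀ := sub_pos.2 hμ₀b
      have hμs_lt : ∀ k, μ₀ < μs k ∧ μs k < b := by
        intro k
        have hk : (1:ℝ) < (k:ℝ) + 2 := by
          have : (0:ℝ) ≤ (k:ℝ) := Nat.cast_nonneg k
          linarith
        have h1 : (b - μ₀) / ((k:ℝ) + 2) < b - μ₀ := div_lt_self hbm hk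
        have h2 : 0 < (b - μ₀) / ((k:ℝ) + 2) := by positivity
        constructor
        · simp only [hμsdef]; linarith
        · simp only [hμsdef]; linarith
      have hμs_mem : ∀ k, μs k ∈ interior S := by
        intro k
        obtain ⟨s, hs, hlt⟩ := exists_lt_of_lt_csSup ⟨μ₀, hμ₀⟩ (hμs_lt k).2
        exact hOC.out hμ₀ hs ⟨(hμs_lt k).1.le, hlt.le⟩
      have htend : Tendsto μs atTop (𝓝 b) := by
        have h1 : Tendsto (fun k : ℕ => (b - μ₀) / ((k:ℝ) + 2)) atTop (𝓝 0) := by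
          apply Tendsto.div_atTop (tendsto_const_nhds)
          exact tendsto_atTop_add_const_right atTop 2 tendsto_natCast_atTop_atTop
        have h2 := (tendsto_const_nhds (x := b) (f := atTop (α := ℕ))).sub h1
        simpa using h2
      have habs := hsteep μs hμs_mem b hbf htend
      obtain ⟨k, hk⟩ := (habs.eventually_gt_atTop (max |A' μ₀| |β|)).exists
      have h1 : A' μ₀ ≤ A' (μs k) := hmono μ₀ hμ₀ _ (hμs_mem k) (hμs_lt k).1
      have h2 : A' (μs k) < β := hcon _ (hμs_mem k)
      have hle : |A' (μs k)| ≤ max |A' μ₀| |β| := by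
        rw [abs_le]
        constructor
        · have ha := neg_abs_le (A' μ₀)
          have hm := le_max_left |A' μ₀| |β|
          linarith
        · have ha := le_abs_self β
          have hm := le_max_right |A' μ₀| |β|
          linarith
      linarith
    · -- unbounded above: the Legendre transform at β + ε/2 would be infinite
      obtain ⟨C, hC⟩ := legendre_bound S A (β + ε / 2) hup hμ₀S
      rw [not_bddAbove_iff] at hb
      obtain ⟨μ, hμ, hμgt⟩ := hb (max μ₀ ((C - β * μ₀ + A μ₀) / (ε / 2)))
      have hμ₀μ : μ₀ < μ := lt_of_le_of_lt (le_max_left _ _) hμgt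
      have hs := hslope μ hμ hμ₀μ
      have h2 : (C - β * μ₀ + A μ₀) / (ε / 2) < μ := lt_of_le_of_lt (le_max_right _ _) hμgt
      have h3 : C - β * μ₀ + A μ₀ < μ * (ε / 2) := (div_lt_iff₀ hε2).1 h2
      have h4 := hC μ (interior_subset hμ)
      nlinarith
  -- Claim 1: there exists an interior point with derivative ≤ β
  have claim1 : ∃ μ₁ ∈ interior S, A' μ₁ ≤ β := by
    by_contra hcon
    push_neg at hcon
    have hslope : ∀ μ ∈ interior S, μ < μ₀ → A μ - A μ₀ ≤ β * μ - β * μ₀ := by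
      intro μ hμ hlt
      have h2 := hAconv.le_slope_of_hasDerivAt (interior_subset hμ) hμ₀S hlt (hderiv μ hμ)
      rw [slope_def_field] at h2
      have hb := (hcon μ hμ).le
      have hpos : 0 < μ₀ - μ := sub_pos.2 hlt
      have := (le_div_iff₀ hpos).1 (le_trans hb h2)
      nlinarith
    by_cases hb : BddBelow (interior S)
    · -- finite lower boundary: contradict steepness
      set b := sInf (interior S) with hbdef
      have hbni : b ∉ interior S := by
        intro hmem
        obtain ⟨r, hr, hball'⟩ := Metric.isOpen_iff.1 isOpen_interior b hmem
        have hmem2 : b - r / 2 ∈ interior S := by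
          apply hball'
          simp only [Metric.mem_ball, Real.dist_eq]
          rw [abs_of_neg (by linarith : b - r / 2 - b < 0)]
          linarith
        have := csInf_le hb hmem2
        linarith
      have hμ₀b : b < μ₀ :=
        lt_of_le_of_ne (csInf_le hb hμ₀) (fun h => hbni (h ▸ hμ₀))
      have hbf : b ∈ frontier S := by
        rw [frontier]
        exact ⟨closure_mono interior_subset (csInf_mem_closure ⟨μ₀, hμ₀⟩ hb), hbni⟩
      set μs : ℕ → ℝ := fun k => b + (μ₀ - b) / (k + 2) with hμsdef
      have hbm : 0 < μ₀ - b := sub_pos.2 hμ₀b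
      have hμs_lt : ∀ k, μs k < μ₀ ∧ b < μs k := by
        intro k
        have hk : (1:ℝ) < (k:ℝ) + 2 := by
          have : (0:ℝ) ≤ (k:ℝ) := Nat.cast_nonneg k
          linarith
        have h1 : (μ₀ - b) / ((k:ℝ) + 2) < μ₀ - b := div_lt_self hbm hk
        have h2 : 0 < (μ₀ - b) / ((k:ℝ) + 2) := by positivity
        constructor
        · simp only [hμsdef]; linarith
        · simp only [hμsdef]; linarith
      have hμs_mem : ∀ k, μs k ∈ interior S := by
        intro k
        obtain ⟨s, hs, hlt⟩ := exists_lt_of_csInf_lt ⟨μ₀, hμ₀⟩ (hμs_lt k).2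
        exact hOC.out hs hμ₀ ⟨hlt.le, (hμs_lt k).1.le⟩
      have htend : Tendsto μs atTop (𝓝 b) := by
        have h1 : Tendsto (fun k : ℕ => (μ₀ - b) / ((k:ℝ) + 2)) atTop (𝓝 0) := by
          apply Tendsto.div_atTop (tendsto_const_nhds)
          exact tendsto_atTop_add_const_right atTop 2 tendsto_natCast_atTop_atTop
        have h2 := (tendsto_const_nhds (x := b) (f := atTop (α := ℕ))).add h1
        simpa using h2
      have habs := hsteep μs hμs_mem b hbf htend
      obtain ⟨k, hk⟩ := (habs.eventually_gt_atTop (max |A' μ₀| |β|)).exists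
      have h1 : A' (μs k) ≤ A' μ₀ := hmono _ (hμs_mem k) μ₀ hμ₀ (hμs_lt k).1
      have h2 : β < A' (μs k) := hcon _ (hμs_mem k)
      have hle : |A' (μs k)| ≤ max |A' μ₀| |β| := by
        rw [abs_le]
        constructor
        · have ha := neg_abs_le β
          have hm := le_max_right |A' μ₀| |β|
          linarith
        · have ha := le_abs_self (A' μ₀)
          have hm := le_max_left |A' μ₀| |β|
          linarith
      linarith
    · -- unbounded below: the Legendre transform at β - ε/2 would be infinite
      obtain ⟨C, hC⟩ := legendre_bound S A (β - ε / 2) hdown hμ₀S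
      rw [not_bddBelow_iff] at hb
      obtain ⟨μ, hμ, hμlt⟩ := hb (min μ₀ (-((C - β * μ₀ + A μ₀) / (ε / 2))))
      have hμ₀μ : μ < μ₀ := lt_of_lt_of_le hμlt (min_le_left _ _)
      have hs := hslope μ hμ hμ₀μ
      have h2 : μ < -((C - β * μ₀ + A μ₀) / (ε / 2)) := lt_of_lt_of_le hμlt (min_le_right _ _)
      have h3 : (C - β * μ₀ + A μ₀) / (ε / 2) < -μ := by linarith
      have h4 : C - β * μ₀ + A μ₀ < -μ * (ε / 2) := (div_lt_iff₀ hε2).1 h3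
      have h5 := hC μ (interior_subset hμ)
      nlinarith
  -- Combine the two claims via Darboux's theorem
  obtain ⟨μ₁, hμ₁, hA1⟩ := claim1
  obtain ⟨μ₂, hμ₂, hA2⟩ := claim2
  have main : ∃ μc ∈ interior S, A' μc = β := by
    rcases lt_trichotomy μ₁ μ₂ with h | h | h
    · have hsub : Icc μ₁ μ₂ ⊆ interior S := hOC.out hμ₁ hμ₂
      have hD := exists_hasDerivWithinAt_eq_of_ge_of_le h.le
        (f := A) (f' := A') (fun x hx => (hderiv x (hsub hx)).hasDerivWithinAt) hA1 hA2
      obtain ⟨c, hc, hceq⟩ := hD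
      exact ⟨c, hsub hc, hceq⟩
    · subst h
      exact ⟨μ₁, hμ₁, le_antisymm hA1 hA2⟩
    · have := hmono μ₂ hμ₂ μ₁ hμ₁ h
      exact ⟨μ₂, hμ₂, le_antisymm (by linarith) hA2⟩
  obtain ⟨μc, hμc, hceq⟩ := main
  refine ⟨μc, hμc, hceq, ?_⟩
  have key : ∀ ν ∈ S, β * ν - A ν ≤ β * μc - A μc := by
    intro ν hν
    rcases lt_trichotomy ν μc with h | h | h
    · have hs := hAconv.slope_le_of_hasDerivAt hν (interior_subset hμc) h (hderiv μc hμc)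
      rw [slope_def_field, hceq] at hs
      have hp : 0 < μc - ν := sub_pos.2 h
      have := (div_le_iff₀ hp).1 hs
      nlinarith
    · subst h; exact le_refl _
    · have hs := hAconv.le_slope_of_hasDerivAt (interior_subset hμc) hν h (hderiv μc hμc)
      rw [slope_def_field, hceq] at hs
      have hp : 0 < ν - μc := sub_pos.2 h
      have := (le_div_iff₀ hp).1 hs
      nlinarith
  apply le_antisymm
  · rw [legendre]
    refine iSup₂_le fun ν hν => ?_
    have hk := key ν hν
    exact_mod_cast (by nlinarith [mul_comm β μc] : β * ν - A ν ≤ μc * β - A μc)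
  · have h := le_legendre S A β (interior_subset hμc)
    have : (μc * β - A μc : ℝ) = β * μc - A μc := by ring
    rw [this]
    exact h

end
end
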